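/- (Convergence to the optimal wealth.) Let Z be the probability simplex in ℝ^{N_a} and D_φ = [0,T] × [0,w_max]. Let p* : D_φ → Z be continuous and let (f_n)_{n∈ℕ} be functions f_n : D_φ → Z such that sup_{φ∈D_φ} |f_{n,i}(φ) − p*_i(φ)| → 0 as n → ∞ for every i = 1,…,N_a. Let W(·;p*,Y) and W(·;f_n,Y) denote the wealth processes generated by the recursion with control p* and f_n respectively, and assume the bounded-wealth condition holds for p* and for every f_n. Then for every rebalancing time t_m (m = 0,…,N_rb−1), W(t_m^−;f_n,Y) → W(t_m^−;p*,Y) almost surely as n → ∞, and moreover the terminal wealths converge: W(T;f_n,Y) → W(T;p*,Y) almost surely. -/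

import Mathlib

open MeasureTheory Filter Set

noncomputable section

/-- The wealth process: `wealthRec … m = W(t_m^−)`, with `W(t_0^−) = w₀`,
`W(t_m^+) = W(t_m^−) + q(t_m)` and
`W(t_{m+1}^−) = W(t_m^+) · ∑_i p_i(t_m, W(t_m^+)) · Y_i(t_m)`, where `t_m = m·Δt`. -/
def wealthRec (Na Nrb : ℕ) (dt w0 : ℝ) (q : ℕ → ℝ)
    (p : ℝ → ℝ → Fin Na → ℝ) (R : Fin Nrb → Fin Na → ℝ) : ℕ → ℝ
  | 0 => w0
  | m + 1 =>
      let W := wealthRec Na Nrb dt w0 q p R m + q m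
      W * ∑ i, p ((m : ℝ) * dt) W i * (if hm : m < Nrb then R ⟨m, hm⟩ i else 1)

/-- Bounded-wealth condition along a single return path: all the quantities
`W(t_m^−)` (`m ≤ N_rb`, including the terminal wealth) and `W(t_m^+)`
(`m < N_rb`) lie in `[0, w_max]`. -/
def BoundedWealthPath (Na Nrb : ℕ) (dt w0 wmax : ℝ) (q : ℕ → ℝ)
    (p : ℝ → ℝ → Fin Na → ℝ) (R : Fin Nrb → Fin Na → ℝ) : Prop :=
  (∀ m ≤ Nrb, wealthRec Na Nrb dt w0 q p R m ∈ Set.Icc 0 wmax) ∧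
  (∀ m < Nrb, wealthRec Na Nrb dt w0 q p R m + q m ∈ Set.Icc 0 wmax)

lemma wealth_converges_aux
    (Na Nrb : ℕ) (hNrb : 1 ≤ Nrb)
    (T wmax w0 : ℝ) (hT : 0 < T)
    (q : ℕ → ℝ) (R : Fin Nrb → Fin Na → ℝ)
    (pstar : ℝ → ℝ → Fin Na → ℝ)
    (hpcont : ContinuousOn (fun φ : ℝ × ℝ => pstar φ.1 φ.2)
      (Set.Icc 0 T ×ˢ Set.Icc 0 wmax))
    (f : ℕ → ℝ → ℝ → Fin Na → ℝ)
    (hunif : ∀ i : Fin Na, ∀ ε > 0, ∃ N : ℕ, ∀ n ≥ N,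
      ∀ φ ∈ Set.Icc (0 : ℝ) T ×ˢ Set.Icc (0 : ℝ) wmax,
        |f n φ.1 φ.2 i - pstar φ.1 φ.2 i| < ε)
    (hbs : BoundedWealthPath Na Nrb (T / Nrb) w0 wmax q pstar R)
    (hbf : ∀ n, BoundedWealthPath Na Nrb (T / Nrb) w0 wmax q (f n) R) :
    ∀ m ≤ Nrb,
      Tendsto (fun n : ℕ => wealthRec Na Nrb (T / Nrb) w0 q (f n) R m)
        atTop (nhds (wealthRec Na Nrb (T / Nrb) w0 q pstar R m)) := by
  set dt : ℝ := T / Nrb with hdt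
  have hNrb0 : (0 : ℝ) < Nrb := by exact_mod_cast hNrb
  have hdtpos : 0 < dt := div_pos hT hNrb0
  intro m
  induction m with
  | zero => intro _; simp only [wealthRec]; exact tendsto_const_nhds
  | succ m ih =>
    intro hm
    have hm' : m < Nrb := hm
    have IH := ih hm'.le
    have key : ∀ g : ℝ → ℝ → Fin Na → ℝ,
        wealthRec Na Nrb dt w0 q g R (m + 1) =
          (wealthRec Na Nrb dt w0 q g R m + q m) *
            ∑ i, g ((m : ℝ) * dt) (wealthRec Na Nrb dt w0 q g R m + q m) i *
              R ⟨m, hm'⟩ i := by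
      intro g
      simp only [wealthRec, hm', dif_pos]
    rw [key pstar]
    simp only [key]
    set Wn : ℕ → ℝ := fun n => wealthRec Na Nrb dt w0 q (f n) R m + q m with hWndef
    set Wl : ℝ := wealthRec Na Nrb dt w0 q pstar R m + q m with hWldef
    have hWn : ∀ n, Wn n ∈ Set.Icc (0 : ℝ) wmax := fun n => (hbf n).2 m hm'
    have hWl : Wl ∈ Set.Icc (0 : ℝ) wmax := hbs.2 m hm'
    have ht : (m : ℝ) * dt ∈ Set.Icc (0 : ℝ) T := by
      constructor
      · positivity
      · have hmle : (m : ℝ) ≤ (Nrb : ℝ) := by exact_mod_cast hm'.le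
        calc (m : ℝ) * dt ≤ (Nrb : ℝ) * dt := by nlinarith
          _ = T := by rw [hdt]; field_simp [hNrb0.ne']
    have hφ : ∀ n, ((m : ℝ) * dt, Wn n) ∈ Set.Icc (0 : ℝ) T ×ˢ Set.Icc (0 : ℝ) wmax :=
      fun n => ⟨ht, hWn n⟩
    have hWnt : Tendsto Wn atTop (nhds Wl) := IH.add_const (q m)
    have hφt : Tendsto (fun n => (((m : ℝ) * dt, Wn n) : ℝ × ℝ)) atTop
        (nhdsWithin ((m : ℝ) * dt, Wl) (Set.Icc (0 : ℝ) T ×ˢ Set.Icc (0 : ℝ) wmax)) :=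
      tendsto_nhdsWithin_of_tendsto_nhds_of_eventually_within _
        (tendsto_const_nhds.prodMk_nhds hWnt) (Eventually.of_forall hφ)
    have hcont : Tendsto (fun n => pstar ((m : ℝ) * dt) (Wn n)) atTop
        (nhds (pstar ((m : ℝ) * dt) Wl)) :=
      (hpcont ((m : ℝ) * dt, Wl) ⟨ht, hWl⟩).tendsto.comp hφt
    have hconti : ∀ i : Fin Na, Tendsto (fun n => pstar ((m : ℝ) * dt) (Wn n) i) atTop
        (nhds (pstar ((m : ℝ) * dt) Wl i)) := fun i =>
      ((continuous_apply i).tendsto _).comp hcont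
    have hdiff : ∀ i : Fin Na,
        Tendsto (fun n => f n ((m : ℝ) * dt) (Wn n) i - pstar ((m : ℝ) * dt) (Wn n) i)
          atTop (nhds 0) := by
      intro i
      rw [Metric.tendsto_atTop]
      intro ε hε
      obtain ⟨N, hN⟩ := hunif i ε hε
      exact ⟨N, fun n hn => by
        simpa [Real.dist_eq] using hN n hn _ (hφ n)⟩
    have hfi : ∀ i : Fin Na, Tendsto (fun n => f n ((m : ℝ) * dt) (Wn n) i) atTop
        (nhds (pstar ((m : ℝ) * dt) Wl i)) := by
      intro i
      have := (hdiff i).add (hconti i)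
      simpa using this
    exact hWnt.mul (tendsto_finset_sum _ fun i _ => (hfi i).mul_const _)

/-- **Convergence to the optimal wealth.** If the controls `f_n : D_φ → Z` converge
uniformly on `D_φ = [0,T] × [0,w_max]` to the continuous control `p* : D_φ → Z`, and
the bounded-wealth condition holds (a.s.) for `p*` and every `f_n`, then for every
rebalancing time `t_m` the wealths `W(t_m^−; f_n, Y)` converge almost surely to
`W(t_m^−; p*, Y)`, and the terminal wealths `W(T; f_n, Y)` converge almost surely to
`W(T; p*, Y)` (the case `m = N_rb` below). -/
theorem wealth_converges_to_optimal_wealth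
    {Ω : Type*} [MeasurableSpace Ω] (μ : Measure Ω) [IsProbabilityMeasure μ]
    (Na Nrb : ℕ) (hNa : 1 ≤ Na) (hNrb : 1 ≤ Nrb)
    (T wmax w0 : ℝ) (hT : 0 < T) (hwmax : 0 < wmax) (hw0 : 0 < w0)
    (q : ℕ → ℝ)
    (Y : Ω → Fin Nrb → Fin Na → ℝ) (hYmeas : Measurable Y)
    (hYnonneg : ∀ ω m i, 0 ≤ Y ω m i)
    (hYint : ∀ m i, Integrable (fun ω => Y ω m i) μ)
    (pstar : ℝ → ℝ → Fin Na → ℝ)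
    (hpcont : ContinuousOn (fun φ : ℝ × ℝ => pstar φ.1 φ.2)
      (Set.Icc 0 T ×ˢ Set.Icc 0 wmax))
    (hpZ : ∀ φ ∈ Set.Icc (0 : ℝ) T ×ˢ Set.Icc (0 : ℝ) wmax,
      pstar φ.1 φ.2 ∈ stdSimplex ℝ (Fin Na))
    (f : ℕ → ℝ → ℝ → Fin Na → ℝ)
    (hfZ : ∀ n, ∀ φ ∈ Set.Icc (0 : ℝ) T ×ˢ Set.Icc (0 : ℝ) wmax,
      f n φ.1 φ.2 ∈ stdSimplex ℝ (Fin Na))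
    (hunif : ∀ i : Fin Na, ∀ ε > 0, ∃ N : ℕ, ∀ n ≥ N,
      ∀ φ ∈ Set.Icc (0 : ℝ) T ×ˢ Set.Icc (0 : ℝ) wmax,
        |f n φ.1 φ.2 i - pstar φ.1 φ.2 i| < ε)
    (hbddstar : ∀ᵐ ω ∂μ, BoundedWealthPath Na Nrb (T / Nrb) w0 wmax q pstar (Y ω))
    (hbddf : ∀ n, ∀ᵐ ω ∂μ, BoundedWealthPath Na Nrb (T / Nrb) w0 wmax q (f n) (Y ω)) :
    ∀ᵐ ω ∂μ, ∀ m ≤ Nrb,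
      Tendsto (fun n : ℕ => wealthRec Na Nrb (T / Nrb) w0 q (f n) (Y ω) m)
        atTop (nhds (wealthRec Na Nrb (T / Nrb) w0 q pstar (Y ω) m)) := by
  have hall : ∀ᵐ ω ∂μ, ∀ n, BoundedWealthPath Na Nrb (T / Nrb) w0 wmax q (f n) (Y ω) :=
    ae_all_iff.mpr hbddf
  filter_upwards [hbddstar, hall] with ω h1 h2
  exact wealth_converges_aux Na Nrb hNrb T wmax w0 hT q (Y ω) pstar hpcont f hunif h1 h2

end
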